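/- Let D ∈ {2, 3, 4, 6} and let λ₁, λ₂ ∈ ℤ² be primitive vectors with |det(λ₁, λ₂)| = D, where det(λ₁, λ₂) denotes the determinant of the 2×2 integer matrix with rows λ₁ and λ₂. Then there exists a primitive vector α ∈ ℤ² with |det(α, λ₁)| = 1 and |det(α, λ₂)| = 1. -/

import Mathlib

lemma key_14 (c e : ℤ) (h : IsCoprime c e)
    (he : |e| = 2 ∨ |e| = 3 ∨ |e| = 4 ∨ |e| = 6) :
    ∃ s : ℤ, |s * e + c| = 1 := by
  rw [Int.isCoprime_iff_gcd_eq_one] at h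
  have hpc : ∀ p : ℤ, p ∣ |e| → p ∣ c → p ∣ 1 := by
    intro p hp hc
    have h1 : p ∣ e := hp.trans ((abs_dvd e e).mpr dvd_rfl)
    have h2 : p ∣ (Int.gcd c e : ℤ) := Int.dvd_coe_gcd hc h1
    rw [h] at h2
    exact_mod_cast h2
  have hmain : |e| ∣ c - 1 ∨ |e| ∣ c + 1 := by
    rcases he with he | he | he | he <;> rw [he]
    · have h2 : ¬ (2:ℤ) ∣ c := fun hc => by
        have := hpc 2 (by rw [he]) hc; omega
      omega
    · have h3 : ¬ (3:ℤ) ∣ c := fun hc => by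
        have := hpc 3 (by rw [he]) hc; omega
      omega
    · have h2 : ¬ (2:ℤ) ∣ c := fun hc => by
        have := hpc 2 (by rw [he]; norm_num) hc; omega
      omega
    · have h2 : ¬ (2:ℤ) ∣ c := fun hc => by
        have := hpc 2 (by rw [he]; norm_num) hc; omega
      have h3 : ¬ (3:ℤ) ∣ c := fun hc => by
        have := hpc 3 (by rw [he]; norm_num) hc; omega
      have hq : c % 6 = 0 ∨ c % 6 = 1 ∨ c % 6 = 2 ∨ c % 6 = 3 ∨ c % 6 = 4 ∨ c % 6 = 5 := by
        omega
      rcases hq with h | h | h | h | h | h <;> omega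
  rw [abs_dvd, abs_dvd] at hmain
  rcases hmain with ⟨k, hk⟩ | ⟨k, hk⟩
  · exact ⟨-k, by rw [show -k * e + c = 1 by linarith [hk]; ]; norm_num⟩
  · exact ⟨-k, by rw [show -k * e + c = -1 by linarith [hk]]; norm_num⟩

theorem stmt_14 (D : ℤ) (hD : D ∈ ({2, 3, 4, 6} : Set ℤ))
    (l₁ l₂ : ℤ × ℤ) (h₁ : IsCoprime l₁.1 l₁.2) (h₂ : IsCoprime l₂.1 l₂.2)
    (hdet : |l₁.1 * l₂.2 - l₁.2 * l₂.1| = D) :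
    ∃ α : ℤ × ℤ, IsCoprime α.1 α.2 ∧
      |α.1 * l₁.2 - α.2 * l₁.1| = 1 ∧ |α.1 * l₂.2 - α.2 * l₂.1| = 1 := by
  obtain ⟨x, y, hxy⟩ := h₁
  obtain ⟨u, v, huv⟩ := h₂
  set e : ℤ := l₁.1 * l₂.2 - l₁.2 * l₂.1 with he_def
  set c : ℤ := y * l₂.2 + x * l₂.1 with hc_def
  have e1 : c * l₁.1 - e * y = l₂.1 := by
    rw [hc_def, he_def]; linear_combination l₂.1 * hxy
  have e2 : c * l₁.2 + e * x = l₂.2 := by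
    rw [hc_def, he_def]; linear_combination l₂.2 * hxy
  have hcop : IsCoprime c e :=
    ⟨u * l₁.1 + v * l₁.2, v * x - u * y, by
      linear_combination u * e1 + v * e2 + huv⟩
  have hDe : |e| = 2 ∨ |e| = 3 ∨ |e| = 4 ∨ |e| = 6 := by
    simp only [Set.mem_insert_iff, Set.mem_singleton_iff] at hD
    rcases hD with h | h | h | h <;> rw [hdet, h] <;> tauto
  obtain ⟨s, hs⟩ := key_14 c e hcop hDe
  refine ⟨(s * l₁.1 + y, s * l₁.2 - x), ⟨l₁.2, -l₁.1, by ring_nf; linear_combination hxy⟩, ?_, ?_⟩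
  · have : (s * l₁.1 + y) * l₁.2 - (s * l₁.2 - x) * l₁.1 = 1 := by linear_combination hxy
    rw [this]; norm_num
  · have : (s * l₁.1 + y) * l₂.2 - (s * l₁.2 - x) * l₂.1 = s * e + c := by
      rw [he_def, hc_def]; ring
    rw [this]; exact hs
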